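/- Let A be a complex Banach algebra that is biflat with constant K ≥ 1, witnessed by ρ. For n ≥ 1 define σ : Cⁿ(A)→C^{n−1}(A) by (σψ)(a₀,…,a_{n−1}) = ρ(Ψ)(a₀), where Ψ is the bounded bilinear functional Ψ(x,y) = ψ(x,y,a₁,…,a_{n−1}). Then ‖σ‖ ≤ K, and δ(σψ) + σ(δψ) = ψ for every ψ ∈ Cⁿ(A) and every n ≥ 1. Moreover δσδ = δ on C⁰(A), so that id − σδ maps C⁰(A) = A* into the space of traces on A. -/

import Mathlib

/-- `Coch A n` is `Cⁿ(A)`: the Banach space of bounded `(n+1)`-multilinear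
functionals on `A`.  In particular `Coch A 1` is the space of bounded bilinear
functionals on `A × A`, i.e. the dual of the projective tensor product `A ⊗̂ A`. -/
abbrev Coch (A : Type*) [NonUnitalNormedRing A] [NormedSpace ℂ A] (n : ℕ) :=
  ContinuousMultilinearMap ℂ (fun _ : Fin (n + 1) => A) ℂ

variable {A : Type*} [NonUnitalNormedRing A] [NormedSpace ℂ A]

/-- The `j`-th face `(a₀, …, aⱼaⱼ₊₁, …, a_{n+1})` of a tuple. -/
def hochFace {n : ℕ} (a : Fin (n + 2) → A) (j : Fin (n + 1)) : Fin (n + 1) → A :=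
  fun i =>
    if (i : ℕ) < (j : ℕ) then a i.castSucc
    else if (i : ℕ) = (j : ℕ) then a i.castSucc * a i.succ
    else a i.succ

/-- The truncated Hochschild coboundary `δ'`. -/
noncomputable def hochDelta' (n : ℕ) (φ : (Fin (n + 1) → A) → ℂ) :
    (Fin (n + 2) → A) → ℂ :=
  fun a => ∑ j : Fin (n + 1), (-1 : ℂ) ^ (j : ℕ) * φ (hochFace a j)

/-- The Hochschild coboundary `δ`. -/
noncomputable def hochDelta (n : ℕ) (φ : (Fin (n + 1) → A) → ℂ) :
    (Fin (n + 2) → A) → ℂ :=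
  fun a => hochDelta' n φ a +
    (-1 : ℂ) ^ (n + 1) *
      φ (fun i => if i = 0 then a (Fin.last (n + 1)) * a 0 else a i.castSucc)

/-- The signed cyclic shift `t`: `tψ(a₀,…,aₙ) = (−1)ⁿ ψ(aₙ,a₀,…,a_{n−1})`. -/
noncomputable def cycT (n : ℕ) (φ : (Fin (n + 1) → A) → ℂ) :
    (Fin (n + 1) → A) → ℂ :=
  fun a => (-1 : ℂ) ^ n * φ (fun i => a (i - 1))

/-- `ρ` witnesses that `A` is biflat with constant `K`: it is a bounded linear
`A`-bimodule map from the bounded bilinear functionals on `A × A` to `A*`, of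
norm `≤ K`, which is a left inverse to `π*`, where `π(a ⊗ b) = ab`. -/
def IsBiflatWitness {A : Type*} [NonUnitalNormedRing A] [NormedSpace ℂ A]
    (K : ℝ) (ρ : Coch A 1 →L[ℂ] (A →L[ℂ] ℂ)) : Prop :=
  ‖ρ‖ ≤ K ∧
  (∀ (f : A →L[ℂ] ℂ) (Ψ : Coch A 1),
    (∀ x y, Ψ ![x, y] = f (x * y)) → ρ Ψ = f) ∧
  (∀ (a : A) (Ψ Ψ' : Coch A 1),
    (∀ x y, Ψ' ![x, y] = Ψ ![x, y * a]) → ∀ x, ρ Ψ' x = ρ Ψ (x * a)) ∧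
  (∀ (a : A) (Ψ Ψ' : Coch A 1),
    (∀ x y, Ψ' ![x, y] = Ψ ![a * x, y]) → ∀ x, ρ Ψ' x = ρ Ψ (a * x))

/-- `χ ∈ C^k(A)` is the result of applying the splitting map `σ` determined by
`ρ` to `ψ ∈ C^{k+1}(A)`:  `χ(a₀,…,a_k) = ρ[ψ(–, –, a₁, …, a_k)](a₀)`. -/
def RepSigma {A : Type*} [NonUnitalNormedRing A] [NormedSpace ℂ A]
    (ρ : Coch A 1 →L[ℂ] (A →L[ℂ] ℂ)) {k : ℕ}
    (ψ : Coch A (k + 1)) (χ : Coch A k) : Prop :=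
  ∀ (a : Fin (k + 1) → A) (Ψ : Coch A 1),
    (∀ x y, Ψ ![x, y] = ψ (Fin.cons x (Fin.cons y (fun i => a i.succ)))) →
    χ a = ρ Ψ (a 0)

set_option linter.unusedSectionVars false

section BiflatAux

variable {A : Type*} [NonUnitalNormedRing A] [NormedSpace ℂ A]
  [IsScalarTower ℂ A A] [SMulCommClass ℂ A A]

lemma vec_eta (g : Fin 2 → A) : g = ![g 0, g 1] := by
  funext i; fin_cases i <;> rfl

/-- `bil ψ t` is the bounded bilinear functional `(x,y) ↦ ψ(x, y, t)`. -/
noncomputable def bil {k : ℕ} (ψ : Coch A (k + 1)) (t : Fin k → A) : Coch A 1 :=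
  MultilinearMap.mkContinuous
    { toFun := fun g => ψ (Fin.cons (g 0) (Fin.cons (g 1) t))
      map_update_add' := by
        intro dec g i x y
        obtain rfl := Subsingleton.elim dec (instDecidableEqFin 2)
        fin_cases i
        · simp only [Function.update_self, Function.update_of_ne (by decide : (1:Fin 2) ≠ 0)]
          have h := ψ.map_update_add (Fin.cons (g 0) (Fin.cons (g 1) t)) 0 x y
          rw [Fin.update_cons_zero, Fin.update_cons_zero, Fin.update_cons_zero] at h
          exact h
        · simp only [Function.update_self, Function.update_of_ne (by decide : (0:Fin 2) ≠ 1)]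
          have h := ψ.map_update_add (Fin.cons (g 0) (Fin.cons (g 1) t)) (Fin.succ 0) x y
          rw [← Fin.cons_update, ← Fin.cons_update, ← Fin.cons_update,
            Fin.update_cons_zero, Fin.update_cons_zero, Fin.update_cons_zero] at h
          exact h
      map_update_smul' := by
        intro dec g i c x
        obtain rfl := Subsingleton.elim dec (instDecidableEqFin 2)
        fin_cases i
        · simp only [Function.update_self, Function.update_of_ne (by decide : (1:Fin 2) ≠ 0)]
          have h := ψ.map_update_smul (Fin.cons (g 0) (Fin.cons (g 1) t)) 0 c x
          rw [Fin.update_cons_zero, Fin.update_cons_zero] at h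
          simpa using h
        · simp only [Function.update_self, Function.update_of_ne (by decide : (0:Fin 2) ≠ 1)]
          have h := ψ.map_update_smul (Fin.cons (g 0) (Fin.cons (g 1) t)) (Fin.succ 0) c x
          rw [← Fin.cons_update, ← Fin.cons_update,
            Fin.update_cons_zero, Fin.update_cons_zero] at h
          simpa using h }
    (‖ψ‖ * ∏ i, ‖t i‖)
    (by
      intro g
      have h1 := ψ.le_opNorm (Fin.cons (g 0) (Fin.cons (g 1) t))
      have h2 : (∏ i, ‖(Fin.cons (g 0) (Fin.cons (g 1) t) : Fin (k+1+1) → A) i‖)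
          = ‖g 0‖ * (‖g 1‖ * ∏ i, ‖t i‖) := by
        simp [Fin.prod_univ_succ]
      rw [h2] at h1
      refine h1.trans (le_of_eq ?_)
      rw [Fin.prod_univ_succ, Fin.prod_univ_one, Fin.succ_zero_eq_one]
      ring)

lemma bil_apply {k : ℕ} (ψ : Coch A (k + 1)) (t : Fin k → A) (g : Fin 2 → A) :
    bil ψ t g = ψ (Fin.cons (g 0) (Fin.cons (g 1) t)) := rfl

lemma bil_apply₂ {k : ℕ} (ψ : Coch A (k + 1)) (t : Fin k → A) (x y : A) :
    bil ψ t ![x, y] = ψ (Fin.cons x (Fin.cons y t)) := by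
  rw [bil_apply]; simp

lemma bil_unique {k : ℕ} (ψ : Coch A (k + 1)) (t : Fin k → A) (Ψ : Coch A 1)
    (h : ∀ x y, Ψ ![x, y] = ψ (Fin.cons x (Fin.cons y t))) : Ψ = bil ψ t := by
  ext g
  rw [vec_eta g, h, bil_apply₂]

lemma norm_bil_le {k : ℕ} (ψ : Coch A (k + 1)) (t : Fin k → A) :
    ‖bil ψ t‖ ≤ ‖ψ‖ * ∏ i, ‖t i‖ :=
  MultilinearMap.mkContinuous_norm_le _ (by positivity) _

noncomputable def sigmaMap {k : ℕ} (ρ : Coch A 1 →L[ℂ] (A →L[ℂ] ℂ)) (ψ : Coch A (k + 1)) :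
    Coch A k :=
  MultilinearMap.mkContinuous
    { toFun := fun a => ρ (bil ψ (Fin.tail a)) (a 0)
      map_update_add' := by
        intro dec a i x y
        obtain rfl := Subsingleton.elim dec (instDecidableEqFin _)
        induction i using Fin.cases with
        | zero =>
          rw [Fin.tail_update_zero, Fin.tail_update_zero, Fin.tail_update_zero]
          simp [Function.update_self, map_add]
        | succ i =>
          rw [Fin.tail_update_succ, Fin.tail_update_succ, Fin.tail_update_succ]
          have hb : bil ψ (Function.update (Fin.tail a) i (x + y)) =
              bil ψ (Function.update (Fin.tail a) i x) +
                bil ψ (Function.update (Fin.tail a) i y) := by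
            ext g
            simp only [ContinuousMultilinearMap.add_apply, bil_apply, Fin.cons_update]
            exact ψ.map_update_add _ _ x y
          rw [hb, map_add]
          simp [Function.update_of_ne (Fin.succ_ne_zero i).symm]
      map_update_smul' := by
        intro dec a i c x
        obtain rfl := Subsingleton.elim dec (instDecidableEqFin _)
        induction i using Fin.cases with
        | zero =>
          rw [Fin.tail_update_zero, Fin.tail_update_zero]
          simp [Function.update_self, map_smul]
        | succ i =>
          rw [Fin.tail_update_succ, Fin.tail_update_succ]
          have hb : bil ψ (Function.update (Fin.tail a) i (c • x)) =
              c • bil ψ (Function.update (Fin.tail a) i x) := by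
            ext g
            simp only [ContinuousMultilinearMap.smul_apply, bil_apply, Fin.cons_update]
            exact ψ.map_update_smul _ _ c x
          rw [hb, map_smul]
          simp [Function.update_of_ne (Fin.succ_ne_zero i).symm] }
    (‖ρ‖ * ‖ψ‖)
    (by
      intro a
      have h1 : ‖ρ (bil ψ (Fin.tail a)) (a 0)‖ ≤ ‖ρ (bil ψ (Fin.tail a))‖ * ‖a 0‖ :=
        ContinuousLinearMap.le_opNorm _ _
      have h2 : ‖ρ (bil ψ (Fin.tail a))‖ ≤ ‖ρ‖ * ‖bil ψ (Fin.tail a)‖ := ρ.le_opNorm _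
      have h3 := norm_bil_le ψ (Fin.tail a)
      have h4 : (∏ i : Fin (k + 1), ‖a i‖) = ‖a 0‖ * ∏ i : Fin k, ‖Fin.tail a i‖ :=
        Fin.prod_univ_succ _
      calc ‖ρ (bil ψ (Fin.tail a)) (a 0)‖
          ≤ (‖ρ‖ * (‖ψ‖ * ∏ i, ‖Fin.tail a i‖)) * ‖a 0‖ := by
            refine h1.trans (mul_le_mul_of_nonneg_right (h2.trans ?_) (norm_nonneg _))
            exact mul_le_mul_of_nonneg_left h3 (norm_nonneg ρ)
        _ = (‖ρ‖ * ‖ψ‖) * ∏ i, ‖a i‖ := by rw [h4]; ring)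

lemma sigmaMap_apply {k : ℕ} (ρ : Coch A 1 →L[ℂ] (A →L[ℂ] ℂ)) (ψ : Coch A (k + 1))
    (a : Fin (k + 1) → A) : sigmaMap ρ ψ a = ρ (bil ψ (Fin.tail a)) (a 0) := rfl

/-- The bounded linear functional `z ↦ ψ(z, t)`. -/
noncomputable def headF {k : ℕ} (ψ : Coch A (k + 1)) (t : Fin (k + 1) → A) : A →L[ℂ] ℂ :=
  LinearMap.mkContinuous
    { toFun := fun z => ψ (Fin.cons z t)
      map_add' := fun x y => by
        have h := ψ.map_update_add (Fin.cons x t) 0 x y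
        rw [Fin.update_cons_zero, Fin.update_cons_zero, Fin.update_cons_zero] at h
        exact h
      map_smul' := fun c x => by
        have h := ψ.map_update_smul (Fin.cons x t) 0 c x
        rw [Fin.update_cons_zero, Fin.update_cons_zero] at h
        simpa using h }
    (‖ψ‖ * ∏ i, ‖t i‖)
    (fun z => by
      have h1 := ψ.le_opNorm (Fin.cons z t)
      have h2 : (∏ i, ‖(Fin.cons z t : Fin (k+1+1) → A) i‖) = ‖z‖ * ∏ i, ‖t i‖ := by
        simp [Fin.prod_univ_succ]
      rw [h2] at h1
      refine h1.trans (le_of_eq (by ring)))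

lemma headF_apply {k : ℕ} (ψ : Coch A (k + 1)) (t : Fin (k + 1) → A) (z : A) :
    headF ψ t z = ψ (Fin.cons z t) := rfl

/-- `(x, y) ↦ f (x * y)`. -/
noncomputable def mul2 (f : A →L[ℂ] ℂ) : Coch A 1 :=
  MultilinearMap.mkContinuous
    { toFun := fun g => f (g 0 * g 1)
      map_update_add' := by
        intro dec g i x y
        obtain rfl := Subsingleton.elim dec (instDecidableEqFin 2)
        fin_cases i
        · show f ((x + y) * g 1) = f (x * g 1) + f (y * g 1)
          rw [add_mul, map_add]
        · show f (g 0 * (x + y)) = f (g 0 * x) + f (g 0 * y)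
          rw [mul_add, map_add]
      map_update_smul' := by
        intro dec g i c x
        obtain rfl := Subsingleton.elim dec (instDecidableEqFin 2)
        fin_cases i
        · show f ((c • x) * g 1) = c • f (x * g 1)
          rw [smul_mul_assoc, map_smul]
        · show f (g 0 * (c • x)) = c • f (g 0 * x)
          rw [mul_smul_comm, map_smul] }
    ‖f‖
    (by
      intro g
      have h1 : ‖f (g 0 * g 1)‖ ≤ ‖f‖ * ‖g 0 * g 1‖ := f.le_opNorm _
      have h2 : ‖g 0 * g 1‖ ≤ ‖g 0‖ * ‖g 1‖ := norm_mul_le _ _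
      refine h1.trans ((mul_le_mul_of_nonneg_left h2 (norm_nonneg f)).trans (le_of_eq ?_))
      rw [Fin.prod_univ_succ, Fin.prod_univ_one, Fin.succ_zero_eq_one]
      try ring)

lemma mul2_apply (f : A →L[ℂ] ℂ) (g : Fin 2 → A) : mul2 f g = f (g 0 * g 1) := rfl

lemma mul2_apply₂ (f : A →L[ℂ] ℂ) (x y : A) : mul2 f ![x, y] = f (x * y) := by
  rw [mul2_apply]; simp

/-- `(x, y) ↦ Ψ(x, y c)`. -/
noncomputable def rmul2 (Ψ : Coch A 1) (c : A) : Coch A 1 :=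
  Ψ.compContinuousLinearMap ![ContinuousLinearMap.id ℂ A, (ContinuousLinearMap.mul ℂ A).flip c]

lemma rmul2_apply₂ (Ψ : Coch A 1) (c : A) (x y : A) : rmul2 Ψ c ![x, y] = Ψ ![x, y * c] := by
  rw [rmul2, ContinuousMultilinearMap.compContinuousLinearMap_apply]
  congr 1
  funext i; fin_cases i <;> simp

lemma rmul2_apply (Ψ : Coch A 1) (c : A) (g : Fin 2 → A) :
    rmul2 Ψ c g = Ψ ![g 0, g 1 * c] := by
  rw [vec_eta g, rmul2_apply₂]; simp

/-- `(x, y) ↦ Ψ(c x, y)`. -/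
noncomputable def lmul2 (Ψ : Coch A 1) (c : A) : Coch A 1 :=
  Ψ.compContinuousLinearMap ![ContinuousLinearMap.mul ℂ A c, ContinuousLinearMap.id ℂ A]

lemma lmul2_apply₂ (Ψ : Coch A 1) (c : A) (x y : A) : lmul2 Ψ c ![x, y] = Ψ ![c * x, y] := by
  rw [lmul2, ContinuousMultilinearMap.compContinuousLinearMap_apply]
  congr 1
  funext i; fin_cases i <;> simp

lemma lmul2_apply (Ψ : Coch A 1) (c : A) (g : Fin 2 → A) :
    lmul2 Ψ c g = Ψ ![c * g 0, g 1] := by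
  rw [vec_eta g, lmul2_apply₂]; simp

/-- One face inside the tail. -/
def face' {k : ℕ} (t : Fin (k + 1) → A) (q : Fin k) : Fin k → A :=
  fun p => if (p : ℕ) < (q : ℕ) then t p.castSucc
    else if (p : ℕ) = (q : ℕ) then t p.castSucc * t p.succ
    else t p.succ

lemma face_zero {k : ℕ} (a : Fin (k + 2) → A) :
    hochFace a 0 = Fin.cons (a 0 * Fin.tail a 0) (Fin.tail (Fin.tail a)) := by
  funext i
  induction i using Fin.cases with
  | zero => simp [hochFace]; rfl
  | succ p => simp [hochFace]; rfl

lemma face_succ {k : ℕ} (a : Fin (k + 2) → A) (q : Fin k) :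
    hochFace a q.succ = Fin.cons (a 0) (face' (Fin.tail a) q) := by
  funext i
  induction i using Fin.cases with
  | zero => simp [hochFace]
  | succ p =>
    simp only [hochFace, face', Fin.cons_succ, Fin.val_succ]
    rcases lt_trichotomy (p : ℕ) (q : ℕ) with h | h | h
    · rw [if_pos (by omega), if_pos h]
      show a (p.succ).castSucc = a (p.castSucc).succ
      rw [Fin.succ_castSucc]
    · rw [if_neg (by omega), if_pos (by omega), if_neg (by omega), if_pos h]
      show a (p.succ).castSucc * a p.succ.succ = a (p.castSucc).succ * a (p.succ).succ
      rw [Fin.succ_castSucc]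
    · rw [if_neg (by omega), if_neg (by omega), if_neg (by omega), if_neg (by omega)]
      rfl

lemma wrap_chi {k : ℕ} (a : Fin (k + 2) → A) :
    (fun i : Fin (k + 1) => if i = 0 then a (Fin.last (k + 1)) * a 0 else a i.castSucc)
      = Fin.cons (Fin.tail a (Fin.last k) * a 0) (Fin.init (Fin.tail a)) := by
  funext i
  induction i using Fin.cases with
  | zero =>
    rw [if_pos rfl, Fin.cons_zero]
    show a (Fin.last (k + 1)) * a 0 = a (Fin.last k).succ * a 0
    rw [Fin.succ_last]
  | succ p =>
    rw [if_neg (Fin.succ_ne_zero p), Fin.cons_succ]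
    show a (p.succ).castSucc = a (p.castSucc).succ
    rw [Fin.succ_castSucc]

lemma bface_zero {k : ℕ} (x y : A) (t : Fin (k + 1) → A) :
    hochFace (Fin.cons x (Fin.cons y t) : Fin (k + 3) → A) 0 = Fin.cons (x * y) t := by
  funext i
  induction i using Fin.cases with
  | zero => simp [hochFace]
  | succ p => simp [hochFace]

lemma bface_one {k : ℕ} (x y : A) (t : Fin (k + 1) → A) :
    hochFace (Fin.cons x (Fin.cons y t) : Fin (k + 3) → A) (Fin.succ 0)
      = Fin.cons x (Fin.cons (y * t 0) (Fin.tail t)) := by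
  funext i
  induction i using Fin.cases with
  | zero => simp [hochFace]
  | succ p =>
    induction p using Fin.cases with
    | zero =>
      simp only [hochFace, Fin.val_succ, Fin.val_zero, ← Fin.succ_castSucc,
        Fin.castSucc_zero, Fin.cons_succ, Fin.cons_zero, Fin.tail]
      split_ifs <;> first | rfl | omega
    | succ r =>
      simp only [hochFace, Fin.val_succ, Fin.val_zero, ← Fin.succ_castSucc,
        Fin.castSucc_zero, Fin.cons_succ, Fin.cons_zero, Fin.tail]
      split_ifs <;> first | rfl | omega

lemma bface_succ_succ {k : ℕ} (x y : A) (t : Fin (k + 1) → A) (q : Fin k) :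
    hochFace (Fin.cons x (Fin.cons y t) : Fin (k + 3) → A) q.succ.succ
      = Fin.cons x (Fin.cons y (face' t q)) := by
  funext i
  induction i using Fin.cases with
  | zero =>
    simp only [hochFace, Fin.val_zero, Fin.val_succ, Fin.castSucc_zero,
      Fin.cons_succ, Fin.cons_zero]
    split_ifs <;> first | rfl | omega
  | succ p =>
    induction p using Fin.cases with
    | zero =>
      simp only [hochFace, face', Fin.val_succ, Fin.val_zero, ← Fin.succ_castSucc,
        Fin.castSucc_zero, Fin.cons_succ, Fin.cons_zero]
      split_ifs <;> first | rfl | omega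
    | succ r =>
      simp only [hochFace, face', Fin.val_succ, Fin.val_zero, ← Fin.succ_castSucc,
        Fin.castSucc_zero, Fin.cons_succ, Fin.cons_zero]
      split_ifs <;> first | rfl | omega

lemma bwrap {k : ℕ} (x y : A) (t : Fin (k + 1) → A) :
    (fun i : Fin (k + 1 + 1) => if i = 0 then
        (Fin.cons x (Fin.cons y t) : Fin (k + 3) → A) (Fin.last (k + 1 + 1))
          * (Fin.cons x (Fin.cons y t) : Fin (k + 3) → A) 0
      else (Fin.cons x (Fin.cons y t) : Fin (k + 3) → A) i.castSucc)
      = Fin.cons (t (Fin.last k) * x) (Fin.cons y (Fin.init t)) := by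
  have hlast : (Fin.last (k + 1 + 1) : Fin (k + 3)) = ((Fin.last k).succ.succ : Fin (k + 3)) := by
    ext; simp
  funext i
  induction i using Fin.cases with
  | zero =>
    rw [if_pos rfl, Fin.cons_zero, hlast, Fin.cons_succ, Fin.cons_succ, Fin.cons_zero]
  | succ p =>
    rw [if_neg (Fin.succ_ne_zero p), Fin.cons_succ]
    induction p using Fin.cases with
    | zero =>
      simp only [← Fin.succ_castSucc, Fin.castSucc_zero, Fin.cons_succ, Fin.cons_zero]
    | succ r =>
      simp only [← Fin.succ_castSucc, Fin.castSucc_zero, Fin.cons_succ, Fin.cons_zero,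
        Fin.init]


lemma repSigma_eval {k : ℕ} {ρ : Coch A 1 →L[ℂ] (A →L[ℂ] ℂ)} {ψ : Coch A (k + 1)}
    {χ : Coch A k} (h : RepSigma ρ ψ χ) (a : Fin (k + 1) → A) :
    χ a = ρ (bil ψ (Fin.tail a)) (a 0) :=
  h a _ (fun x y => bil_apply₂ ψ (Fin.tail a) x y)

lemma repSigma_sigmaMap {k : ℕ} (ρ : Coch A 1 →L[ℂ] (A →L[ℂ] ℂ)) (ψ : Coch A (k + 1)) :
    RepSigma ρ ψ (sigmaMap ρ ψ) := by
  intro a Ψ hΨ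
  have hu : Ψ = bil ψ (Fin.tail a) := bil_unique _ _ _ hΨ
  rw [hu]; rfl

lemma bil_delta_decomp {k : ℕ} (ψ : Coch A (k + 1)) (dψ : Coch A (k + 2))
    (hd : ⇑dψ = hochDelta (k + 1) ⇑ψ) (t : Fin (k + 1) → A) :
    bil dψ t = mul2 (headF ψ t) - rmul2 (bil ψ (Fin.tail t)) (t 0)
      + ∑ q : Fin k, ((-1 : ℂ) ^ (q : ℕ)) • bil ψ (face' t q)
      + ((-1 : ℂ) ^ k) • lmul2 (bil ψ (Fin.init t)) (t (Fin.last k)) := by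
  have hpow : ∀ m : ℕ, (-1 : ℂ) ^ (m + 1 + 1) = (-1) ^ m := fun m => by
    rw [pow_succ, pow_succ]; ring
  ext g
  simp only [ContinuousMultilinearMap.add_apply, ContinuousMultilinearMap.sub_apply,
    ContinuousMultilinearMap.smul_apply, ContinuousMultilinearMap.sum_apply, smul_eq_mul]
  rw [bil_apply dψ t g,
    show dψ (Fin.cons (g 0) (Fin.cons (g 1) t))
      = hochDelta (k + 1) (⇑ψ) (Fin.cons (g 0) (Fin.cons (g 1) t)) from congrFun hd _]
  simp only [hochDelta, hochDelta']
  rw [Fin.sum_univ_succ, Fin.sum_univ_succ]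
  simp only [bface_zero, bface_one, bface_succ_succ, bwrap, Fin.val_succ, Fin.val_zero,
    pow_zero, one_mul, zero_add, pow_one, hpow]
  simp only [mul2_apply, headF_apply, rmul2_apply, lmul2_apply, bil_apply₂, bil_apply,
    Matrix.cons_val_zero, Matrix.cons_val_one, Matrix.head_cons]
  ring

lemma hochFace_one_eq (b : Fin 2 → A) :
    hochFace b 0 = fun _ : Fin 1 => b 0 * b 1 := by
  funext i
  fin_cases i
  simp [hochFace, Fin.succ_zero_eq_one]

lemma wrap1_eq (b : Fin 2 → A) :
    (fun i : Fin (0 + 1) => if i = 0 then b (Fin.last (0 + 1)) * b 0 else b i.castSucc)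
      = fun _ : Fin 1 => b 1 * b 0 := by
  funext i
  have h : i = 0 := Subsingleton.elim (α := Fin 1) i 0
  subst h
  rw [if_pos rfl]
  rfl

lemma delta0_apply (φ : (Fin 1 → A) → ℂ) (b : Fin 2 → A) :
    hochDelta 0 φ b = φ (fun _ => b 0 * b 1) - φ (fun _ => b 1 * b 0) := by
  simp only [hochDelta, hochDelta', Fin.sum_univ_succ, Finset.univ_eq_empty,
    Finset.sum_empty, Fin.val_zero, pow_zero, one_mul, zero_add, pow_one,
    hochFace_one_eq, wrap1_eq]
  ring

lemma delta1_delta0 (φ : (Fin 1 → A) → ℂ) (c : Fin 3 → A) :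
    hochDelta 1 (hochDelta 0 φ) c = 0 := by
  have F0 : hochFace c 0 = ![c 0 * c 1, c 2] := by
    funext i; fin_cases i <;> simp [hochFace]
  have F1 : hochFace c 1 = ![c 0, c 1 * c 2] := by
    funext i; fin_cases i <;> simp [hochFace]
  have W : (fun i : Fin (1 + 1) => if i = 0 then c (Fin.last (1 + 1)) * c 0 else c i.castSucc)
      = ![c 2 * c 0, c 1] := by
    funext i; fin_cases i <;> simp [Fin.last]
  have : hochDelta 1 (hochDelta 0 φ) c
      = (∑ j : Fin 2, (-1 : ℂ) ^ (j : ℕ) * (hochDelta 0 φ) (hochFace c j))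
        + (-1 : ℂ) ^ (1 + 1) * (hochDelta 0 φ)
            (fun i => if i = 0 then c (Fin.last (1 + 1)) * c 0 else c i.castSucc) := rfl
  rw [this, Fin.sum_univ_two, F0, F1, W, delta0_apply, delta0_apply, delta0_apply]
  simp only [Matrix.cons_val_zero, Matrix.cons_val_one, Matrix.head_cons, mul_assoc,
    Fin.val_zero, Fin.val_one, pow_zero, pow_one, one_mul]
  ring

end BiflatAux

/-- If `A` is biflat with constant `K ≥ 1`, witnessed by `ρ`,
then the map `σψ(a₀,…,a_{n−1}) = ρ[ψ(–,–,a₁,…,a_{n−1})](a₀)` is a well-defined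
bounded operator `Cⁿ(A) → C^{n−1}(A)` of norm `≤ K`, it is a contracting
homotopy for the Hochschild coboundary `δ` in degrees `n ≥ 1`, and `δσδ = δ`
on `C⁰(A)`, so that `id − σδ` maps `C⁰(A) = A*` into the traces on `A`. -/
theorem biflat_splitting_homotopy_for_hochschild_coboundary
    {A : Type*} [NonUnitalNormedRing A] [NormedSpace ℂ A]
    [IsScalarTower ℂ A A] [SMulCommClass ℂ A A] [CompleteSpace A]
    (K : ℝ) (hK : 1 ≤ K) (ρ : Coch A 1 →L[ℂ] (A →L[ℂ] ℂ))
    (hρ : IsBiflatWitness K ρ) :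
    -- σ is well defined on C^{k+1}(A) for every k ≥ 0
    (∀ (k : ℕ) (ψ : Coch A (k + 1)), ∃ χ : Coch A k, RepSigma ρ ψ χ) ∧
    -- ‖σ‖ ≤ K
    (∀ (k : ℕ) (ψ : Coch A (k + 1)) (χ : Coch A k),
      RepSigma ρ ψ χ → ‖χ‖ ≤ K * ‖ψ‖) ∧
    -- δ(σψ) + σ(δψ) = ψ for ψ ∈ Cⁿ(A), n ≥ 1
    (∀ (k : ℕ) (ψ : Coch A (k + 1)) (χ : Coch A k)
        (dψ : Coch A (k + 2)) (χ' : Coch A (k + 1)),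
      RepSigma ρ ψ χ → ⇑dψ = hochDelta (k + 1) ⇑ψ → RepSigma ρ dψ χ' →
      hochDelta k ⇑χ + ⇑χ' = ⇑ψ) ∧
    -- δσδ = δ on C⁰(A), and id − σδ maps A* into the traces
    (∀ (f : Coch A 0) (df : Coch A 1) (g : Coch A 0),
      ⇑df = hochDelta 0 ⇑f → RepSigma ρ df g →
      hochDelta 0 ⇑g = hochDelta 0 ⇑f ∧
      ∀ a b : A,
        f (fun _ => a * b) - g (fun _ => a * b) =
          f (fun _ => b * a) - g (fun _ => b * a)) := by
  obtain ⟨hρ1, hρ2, hρ3, hρ4⟩ := hρ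
  have hK0 : (0 : ℝ) ≤ K := zero_le_one.trans hK
  have key : ∀ (k : ℕ) (ψ : Coch A (k + 1)) (χ : Coch A k)
      (dψ : Coch A (k + 2)) (χ' : Coch A (k + 1)),
      RepSigma ρ ψ χ → ⇑dψ = hochDelta (k + 1) ⇑ψ → RepSigma ρ dψ χ' →
      hochDelta k ⇑χ + ⇑χ' = ⇑ψ := by
    intro k ψ χ dψ χ' hχ hd hχ'
    funext a
    have hA : χ' a = ρ (bil dψ (Fin.tail a)) (a 0) := repSigma_eval hχ' a
    have hB := bil_delta_decomp ψ dψ hd (Fin.tail a)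
    have e1 : ρ (mul2 (headF ψ (Fin.tail a))) = headF ψ (Fin.tail a) :=
      hρ2 _ _ (fun x y => mul2_apply₂ _ x y)
    have e2 : ρ (rmul2 (bil ψ (Fin.tail (Fin.tail a))) (Fin.tail a 0)) (a 0)
        = ρ (bil ψ (Fin.tail (Fin.tail a))) (a 0 * Fin.tail a 0) :=
      hρ3 _ _ _ (fun x y => rmul2_apply₂ _ _ x y) (a 0)
    have e4 : ρ (lmul2 (bil ψ (Fin.init (Fin.tail a))) (Fin.tail a (Fin.last k))) (a 0)
        = ρ (bil ψ (Fin.init (Fin.tail a))) (Fin.tail a (Fin.last k) * a 0) :=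
      hρ4 _ _ _ (fun x y => lmul2_apply₂ _ _ x y) (a 0)
    have hC : χ' a = ψ a - ρ (bil ψ (Fin.tail (Fin.tail a))) (a 0 * Fin.tail a 0)
        + ∑ q : Fin k, (-1 : ℂ) ^ (q : ℕ) * ρ (bil ψ (face' (Fin.tail a) q)) (a 0)
        + (-1 : ℂ) ^ k * ρ (bil ψ (Fin.init (Fin.tail a))) (Fin.tail a (Fin.last k) * a 0) := by
      rw [hA, hB]
      simp only [map_add, map_sub, map_smul, map_sum, ContinuousLinearMap.add_apply,
        ContinuousLinearMap.sub_apply, ContinuousLinearMap.smul_apply,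
        ContinuousLinearMap.sum_apply, smul_eq_mul]
      rw [e1, e2, e4, headF_apply, Fin.cons_self_tail]
    have hD0 : χ (hochFace a 0) = ρ (bil ψ (Fin.tail (Fin.tail a))) (a 0 * Fin.tail a 0) := by
      rw [face_zero, repSigma_eval hχ, Fin.tail_cons, Fin.cons_zero]
    have hDq : ∀ q : Fin k, χ (hochFace a q.succ) = ρ (bil ψ (face' (Fin.tail a) q)) (a 0) := by
      intro q
      rw [face_succ, repSigma_eval hχ, Fin.tail_cons, Fin.cons_zero]
    have hDw : χ (fun i : Fin (k + 1) =>
          if i = 0 then a (Fin.last (k + 1)) * a 0 else a i.castSucc)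
        = ρ (bil ψ (Fin.init (Fin.tail a))) (Fin.tail a (Fin.last k) * a 0) := by
      rw [wrap_chi, repSigma_eval hχ, Fin.tail_cons, Fin.cons_zero]
    have hE : hochDelta k (⇑χ) a = (∑ j : Fin (k + 1), (-1 : ℂ) ^ (j : ℕ) * χ (hochFace a j))
        + (-1 : ℂ) ^ (k + 1)
          * χ (fun i => if i = 0 then a (Fin.last (k + 1)) * a 0 else a i.castSucc) := rfl
    show hochDelta k (⇑χ) a + χ' a = ψ a
    rw [hE, Fin.sum_univ_succ, hD0, hDw, hC]
    simp only [hDq, Fin.val_succ, Fin.val_zero, pow_zero, one_mul]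
    have hsum : ∑ q : Fin k, (-1 : ℂ) ^ ((q : ℕ) + 1) * ρ (bil ψ (face' (Fin.tail a) q)) (a 0)
        = -∑ q : Fin k, (-1 : ℂ) ^ (q : ℕ) * ρ (bil ψ (face' (Fin.tail a) q)) (a 0) := by
      rw [← Finset.sum_neg_distrib]
      exact Finset.sum_congr rfl (fun q _ => by rw [pow_succ]; ring)
    rw [hsum]
    ring
  refine ⟨fun k ψ => ⟨sigmaMap ρ ψ, repSigma_sigmaMap ρ ψ⟩, ?_, key, ?_⟩
  · intro k ψ χ h
    refine ContinuousMultilinearMap.opNorm_le_bound (mul_nonneg hK0 (norm_nonneg _)) ?_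
    intro a
    rw [repSigma_eval h a]
    calc ‖ρ (bil ψ (Fin.tail a)) (a 0)‖
        ≤ ‖ρ (bil ψ (Fin.tail a))‖ * ‖a 0‖ := ContinuousLinearMap.le_opNorm _ _
      _ ≤ (‖ρ‖ * ‖bil ψ (Fin.tail a)‖) * ‖a 0‖ :=
          mul_le_mul_of_nonneg_right (ρ.le_opNorm _) (norm_nonneg _)
      _ ≤ (K * (‖ψ‖ * ∏ i : Fin k, ‖a i.succ‖)) * ‖a 0‖ := by
          refine mul_le_mul_of_nonneg_right ?_ (norm_nonneg _)
          exact mul_le_mul hρ1 (norm_bil_le ψ (Fin.tail a)) (norm_nonneg _) hK0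
      _ = (K * ‖ψ‖) * ∏ i, ‖a i‖ := by rw [Fin.prod_univ_succ]; ring
  · intro f df g hdf hg
    have hd0 : ⇑(0 : Coch A 2) = hochDelta 1 (⇑df) := by
      funext c
      rw [hdf]
      simp [delta1_delta0]
    have hz : RepSigma ρ (0 : Coch A 2) (0 : Coch A 1) := by
      intro a Ψ hΨ
      have hΨ0 : Ψ = 0 := by
        ext g'
        rw [vec_eta g', hΨ]
        simp
      simp [hΨ0]
    have hkey := key 0 df g (0 : Coch A 2) (0 : Coch A 1) hg hd0 hz
    have h1 : hochDelta 0 ⇑g = hochDelta 0 ⇑f := by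
      funext u
      have hu := congrFun hkey u
      simp only [Pi.add_apply, ContinuousMultilinearMap.zero_apply, add_zero] at hu
      rw [hu, hdf]
    refine ⟨h1, ?_⟩
    intro x y
    have h2 := congrFun h1 ![x, y]
    rw [delta0_apply, delta0_apply] at h2
    simp only [Matrix.cons_val_zero, Matrix.cons_val_one, Matrix.head_cons] at h2
    linear_combination -h2
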